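/- Fatou's lemma for order integrals: Let (X, Ω, μ, E) be a measure space with Ω a σ-algebra and E σ-Dedekind complete. For any sequence (f_n) of measurable functions X → [0,∞], ∫ᵒ (liminf_n f_n) dμ ≤ ⋁_{n≥1} ⋀_{k≥n} ∫ᵒ f_k dμ in E̅. -/

import Mathlib

set_option linter.unusedSectionVars false


open MeasureTheory

/-- The action of `ℝ⁺` (as `ℝ≥0`) on `E̅⁺ ⊆ WithTop E`: `r • ∞ = ∞` for
`r > 0` and `0 • ∞ = 0`. -/
noncomputable def eSMul {E : Type*} [AddCommGroup E] [Module ℝ E]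
    (r : NNReal) (x : WithTop E) : WithTop E :=
  if r = 0 then 0 else x.map fun e => (r : ℝ) • e

/-- The order integral of a nonnegative elementary (finite-valued simple
measurable) function with respect to a set map `μ : Ω → E̅⁺`. -/
noncomputable def elemOInt {X : Type*} [MeasurableSpace X]
    {E : Type*} [AddCommGroup E] [Module ℝ E]
    (μ : Set X → WithTop E) (φ : SimpleFunc X NNReal) : WithTop E :=
  ∑ r ∈ φ.range, eSMul r (μ (⇑φ ⁻¹' {r}))

/-- `μ : Ω → E̅⁺` is an order-σ-additive `E̅⁺`-valued measure on the σ-algebra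
of measurable sets. -/
def IsOMeasure {X : Type*} [MeasurableSpace X]
    {E : Type*} [AddCommGroup E] [PartialOrder E] (μ : Set X → WithTop E) : Prop :=
  μ ∅ = 0 ∧ (∀ s : Set X, MeasurableSet s → 0 ≤ μ s) ∧
  ∀ Δ : ℕ → Set X, (∀ n, MeasurableSet (Δ n)) →
    (∀ m n, m ≠ n → Disjoint (Δ m) (Δ n)) →
    IsLUB (Set.range fun N => ∑ n ∈ Finset.range N, μ (Δ n)) (μ (⋃ n, Δ n))


/-- `I ∈ E̅⁺` is the order integral of the measurable function `f : X → [0,∞]`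
with respect to `μ`: it is the supremum of the order integrals of some (hence,
by well-definedness, any) sequence of nonnegative elementary functions
increasing pointwise to `f`. -/
def HasOInt {X : Type*} [MeasurableSpace X]
    {E : Type*} [AddCommGroup E] [PartialOrder E] [Module ℝ E]
    (μ : Set X → WithTop E) (f : X → ENNReal) (I : WithTop E) : Prop :=
  ∃ φ : ℕ → SimpleFunc X NNReal,
    (∀ x : X, Monotone fun n => φ n x) ∧
    (∀ x : X, (⨆ n, ((φ n x : ENNReal))) = f x) ∧
    IsLUB (Set.range fun n => elemOInt μ (φ n)) I


section ESMul
variable {E : Type*} [AddCommGroup E] [PartialOrder E] [IsOrderedAddMonoid E] [Module ℝ E] [PosSMulStrictMono ℝ E]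

lemma eSMul_zero_right (r : NNReal) : eSMul (E := E) r 0 = 0 := by
  unfold eSMul
  split
  · rfl
  · rw [← WithTop.coe_zero, WithTop.map_coe, smul_zero]

lemma eSMul_zero_left (x : WithTop E) : eSMul (0 : NNReal) x = 0 := if_pos rfl

lemma eSMul_top {r : NNReal} (hr : r ≠ 0) : eSMul (E := E) r ⊤ = ⊤ := by
  unfold eSMul; rw [if_neg hr]; rfl

lemma eSMul_coe {r : NNReal} (hr : r ≠ 0) (e : E) :
    eSMul r (e : WithTop E) = ((r : ℝ) • e : E) := by
  unfold eSMul; rw [if_neg hr, WithTop.map_coe]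

lemma eSMul_add (r : NNReal) (x y : WithTop E) :
    eSMul r (x + y) = eSMul r x + eSMul r y := by
  rcases eq_or_ne r 0 with rfl | hr
  · simp [eSMul]
  · induction x using WithTop.recTopCoe with
    | top => rw [WithTop.top_add, eSMul_top hr, WithTop.top_add]
    | coe a =>
      induction y using WithTop.recTopCoe with
      | top => rw [WithTop.add_top, eSMul_top hr, WithTop.add_top]
      | coe b =>
        rw [← WithTop.coe_add, eSMul_coe hr, eSMul_coe hr, eSMul_coe hr,
          ← WithTop.coe_add, smul_add]

lemma eSMul_sum {ι : Type*} (r : NNReal) (s : Finset ι) (f : ι → WithTop E) :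
    eSMul r (∑ i ∈ s, f i) = ∑ i ∈ s, eSMul r (f i) := by
  classical
  induction s using Finset.induction_on with
  | empty => simp [eSMul_zero_right]
  | insert _ _ h ih => rw [Finset.sum_insert h, Finset.sum_insert h, eSMul_add, ih]

lemma eSMul_mono (r : NNReal) {x y : WithTop E} (h : x ≤ y) :
    eSMul r x ≤ eSMul r y := by
  rcases eq_or_ne r 0 with rfl | hr
  · simp [eSMul]
  · induction y using WithTop.recTopCoe with
    | top => rw [eSMul_top hr]; exact le_top
    | coe b =>
      rcases WithTop.le_coe_iff.1 h with ⟨a, rfl, hab⟩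
      rw [eSMul_coe hr, eSMul_coe hr, WithTop.coe_le_coe]
      exact smul_le_smul_of_nonneg_left hab r.2

lemma eSMul_nonneg (r : NNReal) {x : WithTop E} (h : 0 ≤ x) : 0 ≤ eSMul r x := by
  have := eSMul_mono r h
  rwa [eSMul_zero_right] at this

lemma eSMul_le_eSMul {r s : NNReal} (hrs : r ≤ s) {x : WithTop E} (hx : 0 ≤ x) :
    eSMul r x ≤ eSMul s x := by
  rcases eq_or_ne r 0 with rfl | hr
  · rw [eSMul]; simp only [if_pos rfl]; exact eSMul_nonneg s hx
  · have hs : s ≠ 0 := fun h => hr (le_antisymm (h ▸ hrs) r.2)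
    induction x using WithTop.recTopCoe with
    | top => rw [eSMul_top hr, eSMul_top hs]
    | coe a =>
      rw [eSMul_coe hr, eSMul_coe hs, WithTop.coe_le_coe]
      have ha : (0 : E) ≤ a := by rwa [← WithTop.coe_zero, WithTop.coe_le_coe] at hx
      exact smul_le_smul_of_nonneg_right hrs ha

lemma eSMul_mul (c r : NNReal) (x : WithTop E) :
    eSMul (c * r) x = eSMul c (eSMul r x) := by
  rcases eq_or_ne c 0 with rfl | hc
  · simp [eSMul]
  · rcases eq_or_ne r 0 with rfl | hr
    · simp [eSMul, eSMul_zero_right]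
    have hcr : c * r ≠ 0 := mul_ne_zero hc hr
    induction x using WithTop.recTopCoe with
    | top => rw [eSMul_top hcr, eSMul_top hr, eSMul_top hc]
    | coe a =>
      rw [eSMul_coe hr, eSMul_coe hc, eSMul_coe hcr, WithTop.coe_inj,
        NNReal.coe_mul, mul_smul]

end ESMul

section S2
variable {E : Type*} [AddCommGroup E] [PartialOrder E] [IsOrderedAddMonoid E] [Module ℝ E] [PosSMulStrictMono ℝ E]

-- translation helper
lemma isLUB_add_le {u : ℕ → WithTop E} {s w : WithTop E} (a : WithTop E)
    (hu : IsLUB (Set.range u) s) (h : ∀ n, u n + a ≤ w) : s + a ≤ w := by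
  induction a using WithTop.recTopCoe with
  | top =>
    have h0 := h 0
    rw [WithTop.add_top] at h0
    rw [WithTop.add_top]
    exact h0
  | coe a₀ =>
    induction w using WithTop.recTopCoe with
    | top => exact le_top
    | coe w₀ =>
      have hb : ∀ n, u n ≤ ((w₀ - a₀ : E) : WithTop E) := by
        intro n
        have hn := h n
        rcases eq_or_ne (u n) ⊤ with htop | hfin
        · rw [htop, WithTop.top_add] at hn
          exact absurd hn (by simp)
        · obtain ⟨x, hx⟩ := WithTop.ne_top_iff_exists.1 hfin
          rw [← hx] at hn ⊢
          rw [← WithTop.coe_add, WithTop.coe_le_coe] at hn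
          exact WithTop.coe_le_coe.2 (le_sub_iff_add_le.2 hn)
      have hs : s ≤ ((w₀ - a₀ : E) : WithTop E) :=
        hu.2 (by rintro _ ⟨n, rfl⟩; exact hb n)
      rcases WithTop.le_coe_iff.1 hs with ⟨s₀, rfl, hs₀⟩
      rw [← WithTop.coe_add, WithTop.coe_le_coe]
      exact add_le_of_le_sub_right hs₀

lemma isLUB_add {u v : ℕ → WithTop E} {s t : WithTop E}
    (hum : Monotone u) (hvm : Monotone v)
    (hu : IsLUB (Set.range u) s) (hv : IsLUB (Set.range v) t) :
    IsLUB (Set.range fun n => u n + v n) (s + t) := by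
  constructor
  · rintro _ ⟨n, rfl⟩
    exact add_le_add (hu.1 ⟨n, rfl⟩) (hv.1 ⟨n, rfl⟩)
  · intro w hw
    have key : ∀ m, v m + s ≤ w := by
      intro m
      rw [add_comm]
      refine isLUB_add_le (v m) hu fun n => ?_
      rcases le_total n m with hnm | hmn
      · exact le_trans (add_le_add (hum hnm) le_rfl) (hw ⟨m, rfl⟩)
      · exact le_trans (add_le_add le_rfl (hvm hmn)) (hw ⟨n, rfl⟩)
    rw [add_comm]
    exact isLUB_add_le s hv key

lemma isLUB_eSMul (r : NNReal) {u : ℕ → WithTop E} {s : WithTop E}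
    (hu : IsLUB (Set.range u) s) :
    IsLUB (Set.range fun n => eSMul r (u n)) (eSMul r s) := by
  rcases eq_or_ne r 0 with rfl | hr
  · simp only [eSMul_zero_left]
    rw [Set.range_const]
    exact isLUB_singleton
  constructor
  · rintro _ ⟨n, rfl⟩
    exact eSMul_mono r (hu.1 ⟨n, rfl⟩)
  · intro w hw
    induction w using WithTop.recTopCoe with
    | top => exact le_top
    | coe w₀ =>
      have hrpos : (0 : ℝ) < r := lt_of_le_of_ne r.2 (by exact_mod_cast (Ne.symm hr))
      have hb : ∀ n, u n ≤ (((r : ℝ)⁻¹ • w₀ : E) : WithTop E) := by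
        intro n
        have hn : eSMul r (u n) ≤ (w₀ : WithTop E) := hw ⟨n, rfl⟩
        rcases eq_or_ne (u n) ⊤ with htop | hfin
        · rw [htop, eSMul_top hr] at hn
          exact absurd hn (by simp)
        · obtain ⟨x, hx⟩ := WithTop.ne_top_iff_exists.1 hfin
          rw [← hx] at hn ⊢
          rw [eSMul_coe hr, WithTop.coe_le_coe] at hn
          have := smul_le_smul_of_nonneg_left hn (inv_nonneg.2 hrpos.le)
          rw [inv_smul_smul₀ hrpos.ne'] at this
          exact WithTop.coe_le_coe.2 this
      have hs := hu.2 (by rintro _ ⟨n, rfl⟩; exact hb n)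
      rcases WithTop.le_coe_iff.1 hs with ⟨s₀, rfl, hs₀⟩
      rw [eSMul_coe hr, WithTop.coe_le_coe]
      have := smul_le_smul_of_nonneg_left hs₀ r.2
      exact le_trans this (le_of_eq (smul_inv_smul₀ hrpos.ne' w₀))

lemma isLUB_finsum {ι : Type*} (s : Finset ι) (u : ι → ℕ → WithTop E) (L : ι → WithTop E)
    (hm : ∀ i, Monotone (u i)) (hl : ∀ i, IsLUB (Set.range (u i)) (L i)) :
    IsLUB (Set.range fun n => ∑ i ∈ s, u i n) (∑ i ∈ s, L i) := by
  classical
  induction s using Finset.induction_on with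
  | empty =>
    simp only [Finset.sum_empty]
    rw [Set.range_const]
    exact isLUB_singleton
  | @insert a s ha ih =>
    simp only [Finset.sum_insert ha]
    exact isLUB_add (hm a) (fun n m hnm => Finset.sum_le_sum fun i _ => hm i hnm)
      (hl a) ih

lemma arch_le (hσ : ∀ S : Set E, S.Nonempty → S.Countable → BddAbove S → ∃ s, IsLUB S s)
    {a b : E} (h : ∀ n : ℕ, (n : ℝ) • a ≤ b) : a ≤ 0 := by
  obtain ⟨s, hs⟩ := hσ (Set.range fun n : ℕ => (n : ℝ) • a)
    ⟨0, ⟨0, by simp⟩⟩ (Set.countable_range _) ⟨b, by rintro _ ⟨n, rfl⟩; exact h n⟩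
  have hub : s ≤ s - a := by
    refine hs.2 ?_
    rintro _ ⟨n, rfl⟩
    have h1 : ((n + 1 : ℕ) : ℝ) • a ≤ s := hs.1 ⟨n + 1, rfl⟩
    rw [Nat.cast_add, Nat.cast_one, add_smul, one_smul] at h1
    exact le_sub_iff_add_le.2 h1
  have := sub_nonneg.2 hub
  rwa [sub_sub_cancel_left, neg_nonneg] at this

lemma eps_le (hσ : ∀ S : Set E, S.Nonempty → S.Countable → BddAbove S → ∃ s, IsLUB S s)
    {x y : WithTop E} (hx : 0 ≤ x)
    (h : ∀ c : NNReal, c < 1 → eSMul c x ≤ y) : x ≤ y := by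
  induction x using WithTop.recTopCoe with
  | top =>
    have h2 := h (1/2) (by rw [div_lt_one two_pos]; exact one_lt_two)
    rw [eSMul_top (one_div_ne_zero two_ne_zero)] at h2
    exact le_trans le_top h2
  | coe e =>
    induction y using WithTop.recTopCoe with
    | top => exact le_top
    | coe i =>
      have he : (0 : E) ≤ e := by rwa [← WithTop.coe_zero, WithTop.coe_le_coe] at hx
      have hi : (0 : E) ≤ i := by
        have h0 := h 0 one_pos
        rw [eSMul_zero_left, ← WithTop.coe_zero, WithTop.coe_le_coe] at h0
        exact h0
      rw [WithTop.coe_le_coe]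
      have key : ∀ n : ℕ, (n : ℝ) • (e - i) ≤ i := by
        intro n
        cases n with
        | zero => simpa using hi
        | succ m =>
          set n : ℕ := m + 1
          have hn0 : (n : NNReal) ≠ 0 := Nat.cast_ne_zero.2 (Nat.succ_ne_zero m)
          set c : NNReal := (n : NNReal) / ((n : NNReal) + 1) with hc
          have hc1 : c < 1 := by
            rw [hc, div_lt_one (by positivity)]
            exact lt_add_of_pos_right _ one_pos
          have hcne : c ≠ 0 := by
            rw [hc]
            exact div_ne_zero hn0 (by positivity)
          have hce := h c hc1
          rw [eSMul_coe hcne, WithTop.coe_le_coe] at hce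
          have hcr : (c : ℝ) = (n : ℝ) / ((n : ℝ) + 1) := by
            rw [hc]; push_cast; ring
          have hpos : (0 : ℝ) < (n : ℝ) + 1 := by positivity
          have h2 := smul_le_smul_of_nonneg_left hce hpos.le
          rw [smul_smul, hcr, mul_div_cancel₀ _ hpos.ne'] at h2
          have h3 : (n : ℝ) • e ≤ i + (n : ℝ) • i := by
            calc (n : ℝ) • e ≤ ((n : ℝ) + 1) • i := h2
            _ = i + (n : ℝ) • i := by rw [add_smul, one_smul, add_comm]
          rw [smul_sub, sub_le_iff_le_add]
          exact h3
      exact sub_nonpos.1 (arch_le hσ key)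
end S2

section Meas
variable {X : Type*} [MeasurableSpace X] {E : Type*} [AddCommGroup E] [PartialOrder E]
  [IsOrderedAddMonoid E]
variable {μ : Set X → WithTop E}

lemma mu_union (hμ : IsOMeasure μ) {s t : Set X} (hs : MeasurableSet s)
    (ht : MeasurableSet t) (hst : Disjoint s t) : μ (s ∪ t) = μ s + μ t := by
  classical
  obtain ⟨h0, hpos, hadd⟩ := hμ
  set Δ : ℕ → Set X := fun n => if n = 0 then s else if n = 1 then t else ∅ with hΔ
  have hmeas : ∀ n, MeasurableSet (Δ n) := by
    intro n; simp only [hΔ]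
    split_ifs
    exacts [hs, ht, MeasurableSet.empty]
  have hdisj : ∀ m n, m ≠ n → Disjoint (Δ m) (Δ n) := by
    intro m n hmn
    simp only [hΔ]
    split_ifs <;> simp_all [hst, hst.symm]
  have hun : ⋃ n, Δ n = s ∪ t := by
    apply Set.Subset.antisymm
    · refine Set.iUnion_subset fun n => ?_
      simp only [hΔ]
      split_ifs
      · exact Set.subset_union_left
      · exact Set.subset_union_right
      · exact Set.empty_subset _
    · rintro x (hx | hx)
      · exact Set.mem_iUnion.2 ⟨0, by simp [hΔ, hx]⟩
      · exact Set.mem_iUnion.2 ⟨1, by simp [hΔ, hx]⟩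
  set S : ℕ → WithTop E := fun N => ∑ n ∈ Finset.range N, μ (Δ n) with hS
  have hSmono : Monotone S := by
    intro a b hab
    exact Finset.sum_le_sum_of_subset_of_nonneg (Finset.range_subset_range.2 hab)
      (fun i _ _ => hpos _ (hmeas i))
  have hS2 : S 2 = μ s + μ t := by
    simp only [hS, Finset.sum_range_succ, Finset.sum_range_one]
    simp [hΔ]
  have hSge2 : ∀ M, S (M + 2) = μ s + μ t := by
    intro M
    induction M with
    | zero => exact hS2
    | succ m ih =>
      have : S (m + 3) = S (m + 2) + μ (Δ (m + 2)) := by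
        simp only [hS]
        rw [Finset.sum_range_succ]
      rw [show m + 1 + 2 = m + 3 from rfl, this, ih]
      have : Δ (m + 2) = ∅ := by simp [hΔ]
      rw [this, h0, add_zero]
  have l1 : IsLUB (Set.range S) (μ (s ∪ t)) := by
    have := hadd Δ hmeas hdisj
    rwa [hun] at this
  have l2 : IsLUB (Set.range S) (μ s + μ t) := by
    constructor
    · rintro _ ⟨N, rfl⟩
      calc S N ≤ S (N + 2) := hSmono (by omega)
      _ = μ s + μ t := hSge2 N
    · intro w hw
      rw [← hS2]
      exact hw ⟨2, rfl⟩
  exact l1.unique l2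

lemma mu_mono (hμ : IsOMeasure μ) {s t : Set X} (hs : MeasurableSet s)
    (ht : MeasurableSet t) (hsub : s ⊆ t) : μ s ≤ μ t := by
  have : t = s ∪ (t \ s) := by rw [Set.union_diff_cancel hsub]
  rw [this, mu_union hμ hs (ht.diff hs) Set.disjoint_sdiff_right]
  exact le_add_of_nonneg_right (hμ.2.1 _ (ht.diff hs))

lemma mu_biUnion (hμ : IsOMeasure μ) {ι : Type*} (s : Finset ι) (T : ι → Set X)
    (hT : ∀ i, MeasurableSet (T i)) (hd : ∀ i ∈ s, ∀ j ∈ s, i ≠ j → Disjoint (T i) (T j)) :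
    μ (⋃ i ∈ s, T i) = ∑ i ∈ s, μ (T i) := by
  classical
  induction s using Finset.induction_on with
  | empty => simpa using hμ.1
  | @insert a s ha ih =>
    have hmb : MeasurableSet (⋃ x ∈ s, T x) := s.measurableSet_biUnion fun i _ => hT i
    have hdis : Disjoint (T a) (⋃ x ∈ s, T x) := by
      rw [Set.disjoint_iUnion₂_right]
      intro i hi
      exact hd a (Finset.mem_insert_self a s) i (Finset.mem_insert_of_mem hi)
        (fun h => ha (h ▸ hi))
    rw [Finset.set_biUnion_insert, Finset.sum_insert ha, mu_union hμ (hT a) hmb hdis,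
      ih fun i hi j hj hij =>
        hd i (Finset.mem_insert_of_mem hi) j (Finset.mem_insert_of_mem hj) hij]

lemma mu_cont_below (hμ : IsOMeasure μ) {A : Set X} (hA : MeasurableSet A)
    {B : ℕ → Set X} (hB : ∀ n, MeasurableSet (B n)) (hmono : Monotone B) :
    IsLUB (Set.range fun n => μ (A ∩ B n)) (μ (A ∩ ⋃ n, B n)) := by
  classical
  set Δ : ℕ → Set X := fun n => Nat.casesOn n (A ∩ B 0) (fun m => A ∩ (B (m + 1) \ B m))
    with hΔ
  have hmeas : ∀ n, MeasurableSet (Δ n) := by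
    intro n
    cases n with
    | zero => exact hA.inter (hB 0)
    | succ m => exact hA.inter ((hB (m + 1)).diff (hB m))
  have hsubB : ∀ n, Δ n ⊆ A ∩ B n := by
    intro n
    cases n with
    | zero => exact subset_rfl
    | succ m => exact Set.inter_subset_inter_right A Set.diff_subset
  have hnotin : ∀ m x, x ∈ Δ (m + 1) → x ∉ B m := fun m x hx => hx.2.2
  have hdisj : ∀ m n, m ≠ n → Disjoint (Δ m) (Δ n) := by
    have key : ∀ m n, m < n → Disjoint (Δ m) (Δ n) := by
      intro m n hmn
      rw [Set.disjoint_left]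
      intro x hxm hxn
      obtain ⟨k, rfl⟩ : ∃ k, n = k + 1 := ⟨n - 1, by omega⟩
      have hxBm : x ∈ B m := (hsubB m hxm).2
      have hxBk : x ∈ B k := hmono (by omega : m ≤ k) hxBm
      exact hnotin k x hxn hxBk
    intro m n hmn
    rcases lt_or_gt_of_ne hmn with h | h
    · exact key m n h
    · exact (key n m h).symm
  have hun : ⋃ n, Δ n = A ∩ ⋃ n, B n := by
    apply Set.Subset.antisymm
    · refine Set.iUnion_subset fun n => (hsubB n).trans ?_
      exact Set.inter_subset_inter_right A (Set.subset_iUnion B n)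
    · rintro x ⟨hxA, hxB⟩
      have hex : ∃ n, x ∈ B n := Set.mem_iUnion.1 hxB
      set n₀ := Nat.find hex with hn₀
      refine Set.mem_iUnion.2 ⟨n₀, ?_⟩
      cases hn : n₀ with
      | zero =>
        refine ⟨hxA, ?_⟩
        have := Nat.find_spec hex
        rwa [← hn₀, hn] at this
      | succ m =>
        refine ⟨hxA, ?_, ?_⟩
        · have := Nat.find_spec hex
          rwa [← hn₀, hn] at this
        · have := Nat.find_min hex (by omega : m < n₀)
          exact this
  have hpartial : ∀ N, (∑ n ∈ Finset.range (N + 1), μ (Δ n)) = μ (A ∩ B N) := by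
    intro N
    induction N with
    | zero => simp [hΔ]
    | succ m ih =>
      rw [Finset.sum_range_succ, ih]
      have heq : (A ∩ B m) ∪ Δ (m + 1) = A ∩ B (m + 1) := by
        simp only [hΔ]
        rw [← Set.inter_union_distrib_left]
        rw [Set.union_diff_cancel' subset_rfl (hmono (Nat.le_succ m))]
      rw [← mu_union hμ (hA.inter (hB m)) (hmeas (m + 1)) ?_, heq]
      rw [Set.disjoint_right]
      intro x hx
      exact fun hx' => hnotin m x hx hx'.2
  have l1 := hμ.2.2 Δ hmeas hdisj
  rw [hun] at l1
  constructor
  · rintro _ ⟨n, rfl⟩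
    show μ (A ∩ B n) ≤ _
    rw [← hpartial n]
    exact l1.1 ⟨n + 1, rfl⟩
  · intro w hw
    refine l1.2 ?_
    rintro _ ⟨N, rfl⟩
    cases N with
    | zero =>
      simp only [Finset.range_zero, Finset.sum_empty]
      exact le_trans (hμ.2.1 _ (hA.inter (hB 0))) (hw ⟨0, rfl⟩)
    | succ m =>
      show (∑ n ∈ Finset.range (m + 1), μ (Δ n)) ≤ w
      rw [hpartial m]
      exact hw ⟨m, rfl⟩
end Meas


section Core
variable {X : Type*} [MeasurableSpace X] {E : Type*} [AddCommGroup E] [PartialOrder E]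
  [IsOrderedAddMonoid E] [Module ℝ E] [PosSMulStrictMono ℝ E] {μ : Set X → WithTop E}

lemma elemOInt_nonneg (hμ : IsOMeasure μ) (φ : SimpleFunc X NNReal) : 0 ≤ elemOInt μ φ :=
  Finset.sum_nonneg fun r _ => eSMul_nonneg r (hμ.2.1 _ (φ.measurableSet_fiber r))

lemma regroup {γ : Type*} (hμ : IsOMeasure μ) (θ : SimpleFunc X γ) (h : γ → NNReal)
    (w : NNReal → NNReal) {B : Set X} (hB : MeasurableSet B) :
    ∑ r ∈ (θ.map h).range, eSMul (w r) (μ (⇑(θ.map h) ⁻¹' {r} ∩ B)) =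
    ∑ t ∈ θ.range, eSMul (w (h t)) (μ (⇑θ ⁻¹' {t} ∩ B)) := by
  classical
  have hmaps : ∀ t ∈ θ.range, h t ∈ (θ.map h).range := by
    intro t ht
    rw [SimpleFunc.range_map]
    exact Finset.mem_image_of_mem h ht
  rw [← Finset.sum_fiberwise_of_maps_to hmaps fun t => eSMul (w (h t)) (μ (⇑θ ⁻¹' {t} ∩ B))]
  refine Finset.sum_congr rfl fun r hr => Eq.symm ?_
  calc ∑ t ∈ θ.range.filter (fun t => h t = r), eSMul (w (h t)) (μ (⇑θ ⁻¹' {t} ∩ B))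
      = ∑ t ∈ θ.range.filter (fun t => h t = r), eSMul (w r) (μ (⇑θ ⁻¹' {t} ∩ B)) :=
        Finset.sum_congr rfl fun t ht => by rw [(Finset.mem_filter.1 ht).2]
    _ = eSMul (w r) (∑ t ∈ θ.range.filter (fun t => h t = r), μ (⇑θ ⁻¹' {t} ∩ B)) :=
        (eSMul_sum _ _ _).symm
    _ = eSMul (w r) (μ (⋃ t ∈ θ.range.filter (fun t => h t = r), (⇑θ ⁻¹' {t} ∩ B))) := by
        rw [mu_biUnion hμ _ _ (fun t => (θ.measurableSet_fiber t).inter hB) ?_]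
        intro i _ j _ hij
        refine Set.disjoint_left.2 fun x hx hx' => hij ?_
        rw [← Set.mem_singleton_iff.1 hx.1, ← Set.mem_singleton_iff.1 hx'.1]
    _ = eSMul (w r) (μ (⇑(θ.map h) ⁻¹' {r} ∩ B)) := by
        congr 1
        apply congrArg
        apply Set.Subset.antisymm
        · refine Set.iUnion₂_subset fun t ht => ?_
          rintro x ⟨hxt, hxB⟩
          refine ⟨?_, hxB⟩
          simp only [Set.mem_preimage, SimpleFunc.coe_map, Function.comp_apply,
            Set.mem_singleton_iff]
          rw [Set.mem_singleton_iff.1 hxt]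
          exact (Finset.mem_filter.1 ht).2
        · rintro x ⟨hxr, hxB⟩
          simp only [Set.mem_preimage, SimpleFunc.coe_map, Function.comp_apply,
            Set.mem_singleton_iff] at hxr
          exact Set.mem_iUnion₂.2 ⟨θ x, Finset.mem_filter.2 ⟨θ.mem_range_self x, hxr⟩,
            ⟨rfl, hxB⟩⟩

lemma pInt_le (hμ : IsOMeasure μ) (φ ψ : SimpleFunc X NNReal) (c : NNReal) {B : Set X}
    (hB : MeasurableSet B) (hcomp : ∀ x ∈ B, c * φ x ≤ ψ x) :
    (∑ r ∈ φ.range, eSMul (c * r) (μ (⇑φ ⁻¹' {r} ∩ B))) ≤ elemOInt μ ψ := by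
  classical
  set θ := φ.pair ψ with hθ
  have hφ : φ = θ.map Prod.fst := SimpleFunc.coe_injective (by
    ext x; simp [hθ, SimpleFunc.pair_apply])
  have hψ : ψ = θ.map Prod.snd := SimpleFunc.coe_injective (by
    ext x; simp [hθ, SimpleFunc.pair_apply])
  calc (∑ r ∈ φ.range, eSMul (c * r) (μ (⇑φ ⁻¹' {r} ∩ B)))
      = ∑ p ∈ θ.range, eSMul (c * p.1) (μ (⇑θ ⁻¹' {p} ∩ B)) := by
        conv_lhs => rw [hφ]
        exact regroup hμ θ Prod.fst (fun r => c * r) hB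
    _ ≤ ∑ p ∈ θ.range, eSMul p.2 (μ (⇑θ ⁻¹' {p} ∩ B)) := by
        refine Finset.sum_le_sum fun p hp => ?_
        rcases Set.eq_empty_or_nonempty (⇑θ ⁻¹' {p} ∩ B) with he | ⟨x, hx⟩
        · rw [he, hμ.1, eSMul_zero_right, eSMul_zero_right]
        · have hxθ : (φ x, ψ x) = p := by
            rw [← SimpleFunc.pair_apply]
            exact Set.mem_singleton_iff.1 hx.1
          have hcle : c * φ x ≤ ψ x := hcomp x hx.2
          refine eSMul_le_eSMul ?_ (hμ.2.1 _ ((θ.measurableSet_fiber p).inter hB))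
          rw [← congrArg Prod.fst hxθ, ← congrArg Prod.snd hxθ]
          exact hcle
    _ ≤ ∑ p ∈ θ.range, eSMul p.2 (μ (⇑θ ⁻¹' {p})) :=
        Finset.sum_le_sum fun p _ => eSMul_mono _ (mu_mono hμ
          ((θ.measurableSet_fiber p).inter hB) (θ.measurableSet_fiber p)
          Set.inter_subset_left)
    _ = elemOInt μ ψ := by
        have := regroup hμ θ Prod.snd id (B := Set.univ) MeasurableSet.univ
        simp only [Set.inter_univ, id] at this
        rw [elemOInt]
        conv_rhs => rw [hψ]
        exact this.symm

lemma isLUB_pInt (hμ : IsOMeasure μ) (φ : SimpleFunc X NNReal) (w : NNReal → NNReal)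
    {B : ℕ → Set X} (hB : ∀ n, MeasurableSet (B n)) (hmono : Monotone B) :
    IsLUB (Set.range fun n => ∑ r ∈ φ.range, eSMul (w r) (μ (⇑φ ⁻¹' {r} ∩ B n)))
      (∑ r ∈ φ.range, eSMul (w r) (μ (⇑φ ⁻¹' {r} ∩ ⋃ n, B n))) :=
  isLUB_finsum φ.range _ _
    (fun r a b hab => eSMul_mono _ (mu_mono hμ ((φ.measurableSet_fiber r).inter (hB a))
      ((φ.measurableSet_fiber r).inter (hB b)) (Set.inter_subset_inter_right _ (hmono hab))))
    (fun r => isLUB_eSMul _ (mu_cont_below hμ (φ.measurableSet_fiber r) hB hmono))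

lemma key_le (hσ : ∀ S : Set E, S.Nonempty → S.Countable → BddAbove S → ∃ s, IsLUB S s)
    (hμ : IsOMeasure μ) (φ : SimpleFunc X NNReal) (d : NNReal)
    {B : Set X} (hB : MeasurableSet B) {f : X → ENNReal}
    (hfb : ∀ x ∈ B, ((d * φ x : NNReal) : ENNReal) ≤ f x) {I : WithTop E}
    (hI : HasOInt μ f I) :
    (∑ r ∈ φ.range, eSMul (d * r) (μ (⇑φ ⁻¹' {r} ∩ B))) ≤ I := by
  obtain ⟨χ, hχm, hχs, hχl⟩ := hI
  refine eps_le hσ (Finset.sum_nonneg fun r _ => eSMul_nonneg _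
    (hμ.2.1 _ ((φ.measurableSet_fiber r).inter hB))) fun c hc => ?_
  set B' : ℕ → Set X := fun k => B ∩ {x | c * (d * φ x) ≤ χ k x} with hB'
  have hB'meas : ∀ k, MeasurableSet (B' k) := fun k =>
    hB.inter (measurableSet_le ((φ.measurable.const_mul d).const_mul c) (χ k).measurable)
  have hB'mono : Monotone B' := fun a b hab =>
    Set.inter_subset_inter_right _ (fun x hx => le_trans hx (hχm x hab))
  have hB'un : ⋃ k, B' k = B := by
    apply Set.Subset.antisymm
    · exact Set.iUnion_subset fun k => Set.inter_subset_left
    · intro x hxB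
      rcases eq_or_ne (d * φ x) 0 with h0 | h0
      · refine Set.mem_iUnion.2 ⟨0, hxB, ?_⟩
        show c * (d * φ x) ≤ χ 0 x
        rw [h0, mul_zero]
        exact zero_le
      · have hlt : ((c * (d * φ x) : NNReal) : ENNReal) < ((d * φ x : NNReal) : ENNReal) := by
          rw [ENNReal.coe_mul]
          calc (c : ENNReal) * ((d * φ x : NNReal) : ENNReal)
              < 1 * ((d * φ x : NNReal) : ENNReal) :=
                (ENNReal.mul_lt_mul_iff_left (by exact_mod_cast h0) ENNReal.coe_ne_top).2
                  (by exact_mod_cast hc)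
            _ = _ := one_mul _
        have hlt2 : ((c * (d * φ x) : NNReal) : ENNReal) < ⨆ k, ((χ k x : NNReal) : ENNReal) := by
          rw [hχs x]
          exact lt_of_lt_of_le hlt (hfb x hxB)
        obtain ⟨k, hk⟩ := lt_iSup_iff.1 hlt2
        refine Set.mem_iUnion.2 ⟨k, hxB, ?_⟩
        show c * (d * φ x) ≤ χ k x
        exact_mod_cast hk.le
  have hlub := isLUB_pInt hμ φ (fun r => c * d * r) hB'meas hB'mono
  rw [hB'un] at hlub
  have hfinal : (∑ r ∈ φ.range, eSMul (c * d * r) (μ (⇑φ ⁻¹' {r} ∩ B))) ≤ I := by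
    refine hlub.2 ?_
    rintro _ ⟨k, rfl⟩
    show (∑ r ∈ φ.range, eSMul (c * d * r) (μ (⇑φ ⁻¹' {r} ∩ B' k))) ≤ I
    refine le_trans (pInt_le hμ φ (χ k) (c * d) (hB'meas k) ?_) (hχl.1 ⟨k, rfl⟩)
    intro x hx
    rw [mul_assoc]
    exact hx.2
  calc eSMul c (∑ r ∈ φ.range, eSMul (d * r) (μ (⇑φ ⁻¹' {r} ∩ B)))
      = ∑ r ∈ φ.range, eSMul (c * d * r) (μ (⇑φ ⁻¹' {r} ∩ B)) := by
        rw [eSMul_sum]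
        refine Finset.sum_congr rfl fun r _ => ?_
        rw [← eSMul_mul, mul_assoc]
    _ ≤ I := hfinal

end Core


/-- Fatou's lemma for order integrals: for a sequence `(f_n)` of measurable
`[0,∞]`-valued functions, with `E` σ-Dedekind complete,
`∫ᵒ (liminf f_n) dμ ≤ ⋁_n ⋀_{k≥n} ∫ᵒ f_k dμ` in `E̅`. -/
theorem order_integral_fatou
    {X : Type*} [MeasurableSpace X]
    {E : Type*} [AddCommGroup E] [PartialOrder E] [IsOrderedAddMonoid E] [Module ℝ E]
    [PosSMulStrictMono ℝ E]
    (hσ : ∀ S : Set E, S.Nonempty → S.Countable → BddAbove S → ∃ s, IsLUB S s)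
    (μ : Set X → WithTop E) (hμ : IsOMeasure μ)
    (f : ℕ → X → ENNReal) (hf : ∀ n, Measurable (f n))
    (I : ℕ → WithTop E) (hI : ∀ n, HasOInt μ (f n) (I n))
    (J : WithTop E)
    (hJ : HasOInt μ (fun x => Filter.liminf (fun n => f n x) Filter.atTop) J)
    (g : ℕ → WithTop E)
    (hg : ∀ n, IsGLB {y : WithTop E | ∃ k, n ≤ k ∧ y = I k} (g n))
    (b : WithTop E) (hb : IsLUB (Set.range g) b) :
    J ≤ b := by
  obtain ⟨ψ, hψm, hψs, hψl⟩ := hJ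
  refine hψl.2 ?_
  rintro _ ⟨m, rfl⟩
  show elemOInt μ (ψ m) ≤ b
  set φ := ψ m with hφdef
  refine eps_le hσ (elemOInt_nonneg hμ φ) fun c hc => ?_
  set B : ℕ → Set X := fun k =>
    {x | ((c * φ x : NNReal) : ENNReal) ≤ ⨅ j, ⨅ (_ : k ≤ j), f j x} with hBdef
  have hBmeas : ∀ k, MeasurableSet (B k) := fun k =>
    measurableSet_le (measurable_coe_nnreal_ennreal.comp (φ.measurable.const_mul c))
      (Measurable.iInf fun j => Measurable.iInf fun _ => hf j)
  have hBmono : Monotone B := by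
    intro a b' hab x hx
    have hx' : ((c * φ x : NNReal) : ENNReal) ≤ ⨅ j, ⨅ (_ : a ≤ j), f j x := hx
    show ((c * φ x : NNReal) : ENNReal) ≤ ⨅ j, ⨅ (_ : b' ≤ j), f j x
    exact le_trans hx' (le_iInf₂ fun j hj => iInf₂_le j (hab.trans hj))
  have hBun : ⋃ k, B k = Set.univ := by
    rw [Set.eq_univ_iff_forall]
    intro x
    rcases eq_or_ne (c * φ x) 0 with h0 | h0
    · refine Set.mem_iUnion.2 ⟨0, ?_⟩
      show ((c * φ x : NNReal) : ENNReal) ≤ ⨅ j, ⨅ (_ : 0 ≤ j), f j x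
      rw [h0, ENNReal.coe_zero]
      exact zero_le
    · have hφx0 : φ x ≠ 0 := fun h => h0 (by rw [h, mul_zero])
      have hφle : ((φ x : NNReal) : ENNReal) ≤
          Filter.liminf (fun n => f n x) Filter.atTop := by
        have h' : (⨆ n, ((ψ n x : NNReal) : ENNReal)) =
            Filter.liminf (fun n => f n x) Filter.atTop := hψs x
        rw [← h']
        exact le_iSup (fun n => ((ψ n x : NNReal) : ENNReal)) m
      have hlt : ((c * φ x : NNReal) : ENNReal) < ((φ x : NNReal) : ENNReal) := by
        rw [ENNReal.coe_mul]
        calc (c : ENNReal) * ((φ x : NNReal) : ENNReal)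
            < 1 * ((φ x : NNReal) : ENNReal) :=
              (ENNReal.mul_lt_mul_iff_left (by exact_mod_cast hφx0) ENNReal.coe_ne_top).2
                (by exact_mod_cast hc)
          _ = _ := one_mul _
      have hlt2 : ((c * φ x : NNReal) : ENNReal) < ⨆ k, ⨅ j, ⨅ (_ : k ≤ j), f j x := by
        refine lt_of_lt_of_le (lt_of_lt_of_le hlt hφle) ?_
        exact le_of_eq Filter.liminf_eq_iSup_iInf_of_nat
      obtain ⟨k, hk⟩ := lt_iSup_iff.1 hlt2
      exact Set.mem_iUnion.2 ⟨k, hk.le⟩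
  have hlub := isLUB_pInt hμ φ (fun r => c * r) hBmeas hBmono
  rw [hBun] at hlub
  simp only [Set.inter_univ] at hlub
  have hrw : eSMul c (elemOInt μ φ) = ∑ r ∈ φ.range, eSMul (c * r) (μ (⇑φ ⁻¹' {r})) := by
    rw [elemOInt, eSMul_sum]
    exact Finset.sum_congr rfl fun r _ => (eSMul_mul c r _).symm
  rw [hrw]
  refine hlub.2 ?_
  rintro _ ⟨k, rfl⟩
  show (∑ r ∈ φ.range, eSMul (c * r) (μ (⇑φ ⁻¹' {r} ∩ B k))) ≤ b
  have hQgk : (∑ r ∈ φ.range, eSMul (c * r) (μ (⇑φ ⁻¹' {r} ∩ B k))) ≤ g k := by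
    refine (hg k).2 ?_
    rintro y ⟨j, hkj, rfl⟩
    refine key_le hσ hμ φ c (hBmeas k) (f := f j) ?_ (hI j)
    intro x hx
    exact le_trans hx (iInf₂_le j hkj)
  exact le_trans hQgk (hb.1 ⟨k, rfl⟩)
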